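/- Let (Λ, dx) be a complete σ-finite measure space, N ≥ 2 an integer, and (u_n) a sequence of finite real-valued functions on Λ. If there exists a finite function U on Λ^N such that (G_{N,1} u_n)(x_1,...,x_N) = N^{-1} Σ_{i=1}^N u_n(x_i) converges to U(x_1,...,x_N) for a.e. (x_1,...,x_N) ∈ Λ^N, then there exists a finite function u on Λ such that u_n → u a.e. on Λ. -/

import Mathlib

open MeasureTheory Filter

/-- If the arithmetic means `N⁻¹ ∑ᵢ uₙ(xᵢ)` converge a.e. on `Λ^N` to a finite
function `U`, then the `uₙ` converge a.e. on `Λ` to some finite function `u`. -/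
theorem ae_tendsto_of_mean_ae_tendsto
    {Λ : Type*} [MeasurableSpace Λ] (μ : Measure Λ) [SigmaFinite μ] (hμ : μ ≠ 0)
    (N : ℕ) (hN : 2 ≤ N) (u : ℕ → Λ → ℝ) (U : (Fin N → Λ) → ℝ)
    (h : ∀ᵐ x ∂(Measure.pi fun _ : Fin N => μ),
      Tendsto (fun n => (N : ℝ)⁻¹ * ∑ i, u n (x i)) atTop (nhds (U x))) :
    ∃ v : Λ → ℝ, ∀ᵐ t ∂μ, Tendsto (fun n => u n t) atTop (nhds (v t)) := by
  obtain ⟨M, rfl⟩ : ∃ M, N = M + 1 := ⟨N - 1, by omega⟩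
  set ν : Measure (Fin M → Λ) := Measure.pi fun _ => μ with hν
  have hμuniv : μ Set.univ ≠ 0 := Measure.measure_univ_ne_zero.2 hμ
  have hpi_ne : (Measure.pi fun _ : Fin (M + 1) => μ) ≠ 0 := by
    rw [← Measure.measure_univ_ne_zero, Measure.pi_univ]
    simpa using hμ
  have hν_ne : ν ≠ 0 := by
    rw [hν, ← Measure.measure_univ_ne_zero, Measure.pi_univ]
    simp only [Finset.prod_const]
    positivity
  have hMne : ((M : ℝ) + 1) ≠ 0 := by positivity
  -- transport h to the product μ.prod ν
  have hmp := MeasureTheory.measurePreserving_piFinSuccAbove (fun _ : Fin (M+1) => μ) 0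
  have hins : ∀ (q : Λ × (Fin M → Λ)) (n : ℕ),
      ∑ i, u n ((MeasurableEquiv.piFinSuccAbove (fun _ : Fin (M+1) => Λ) 0).symm q i)
        = u n q.1 + ∑ j, u n (q.2 j) := by
    intro q n
    simp [Fin.sum_univ_succ, Fin.insertNthEquiv, Fin.insertNth_zero']
  have h2 : ∀ᵐ p ∂(μ.prod ν), ∃ L, Tendsto
      (fun n => u n p.1 + ∑ j, u n (p.2 j)) atTop (nhds L) := by
    have h2' := (hmp.symm _).quasiMeasurePreserving.ae h
    filter_upwards [h2'] with p hp
    refine ⟨(M+1 : ℝ) * U ((MeasurableEquiv.piFinSuccAbove (fun _ => Λ) 0).symm p), ?_⟩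
    have h3 := hp.const_mul ((M : ℝ) + 1)
    refine h3.congr fun n => ?_
    rw [← mul_assoc]
    rw [show ((M:ℝ)+1) * ((((M+1):ℕ)):ℝ)⁻¹ = 1 by push_cast; field_simp]
    rw [one_mul, hins]
  -- swap and get a.e. z, a.e. x
  have h4 : ∀ᵐ z ∂ν, ∀ᵐ x ∂μ, ∃ L, Tendsto
      (fun n => u n x + ∑ j, u n (z j)) atTop (nhds L) := by
    have hsw : MeasurePreserving Prod.swap (ν.prod μ) (μ.prod ν) :=
      Measure.measurePreserving_swap
    have := hsw.quasiMeasurePreserving.ae h2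
    exact Measure.ae_ae_of_ae_prod this
  have : (ae ν).NeBot := ae_neBot.2 hν_ne
  obtain ⟨z, hz⟩ := h4.exists
  have : (ae μ).NeBot := ae_neBot.2 hμ
  obtain ⟨a, La, ha⟩ := hz.exists
  set S : ℕ → ℝ := fun n => ∑ j, u n (z j) with hS
  set c : ℕ → ℝ := fun n => u n a with hc
  -- a.e. x, u n x - c n converges
  have h5 : ∀ᵐ x ∂μ, ∃ L, Tendsto (fun n => u n x - c n) atTop (nhds L) := by
    filter_upwards [hz] with x ⟨Lx, hx⟩
    exact ⟨Lx - La, by simpa using hx.sub ha⟩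
  set w : Λ → ℝ := fun x => limUnder atTop (fun n => u n x - c n) with hw
  have h6 : ∀ᵐ x ∂μ, Tendsto (fun n => u n x - c n) atTop (nhds (w x)) := by
    filter_upwards [h5] with x hx
    exact tendsto_nhds_limUnder hx
  obtain ⟨T, hTsub, hTm, hT0⟩ := exists_measurable_superset_of_null (ae_iff.1 h5)
  have h7 : ∀ᵐ x ∂(Measure.pi fun _ : Fin (M+1) => μ),
      ∀ i, ∃ L, Tendsto (fun n => u n (x i) - c n) atTop (nhds L) := by
    rw [ae_all_iff]
    intro i
    rw [ae_iff]
    refine measure_mono_null (fun x hx => ?_)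
      (Measure.pi_eval_preimage_null (fun _ : Fin (M+1) => μ) hT0 (i := i))
    exact hTsub hx
  have : (ae (Measure.pi fun _ : Fin (M+1) => μ)).NeBot := ae_neBot.2 hpi_ne
  obtain ⟨x0, hx0h, hx0g⟩ := (h.and h7).exists
  choose L hL using hx0g
  have hsum : Tendsto (fun n => ∑ i, (u n (x0 i) - c n)) atTop (nhds (∑ i, L i)) :=
    tendsto_finset_sum _ fun i _ => hL i
  set γ : ℝ := U x0 - (((M+1 : ℕ) : ℝ))⁻¹ * ∑ i, L i with hγdef
  have hγ : Tendsto c atTop (nhds γ) := by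
    have h8 := hx0h.sub (hsum.const_mul ((((M+1) : ℕ) : ℝ))⁻¹)
    refine h8.congr fun n => ?_
    have h9 : ∑ i, (u n (x0 i) - c n) = (∑ i, u n (x0 i)) - ((M : ℝ) + 1) * c n := by
      rw [Finset.sum_sub_distrib]
      simp [Finset.card_univ, mul_comm]
    rw [h9]
    push_cast
    field_simp
    ring
  refine ⟨fun t => w t + γ, ?_⟩
  filter_upwards [h6] with t ht
  have h10 := ht.add hγ
  refine h10.congr fun n => by ring
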